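/- Every semilinear subset of ℕᵏ is the Parikh image of a regular language: given finitely many base vectors v₁,...,vₙ ∈ ℕᵏ and for each i period vectors w_i^1,...,w_i^{m_i} ∈ ℕᵏ, there exists a regular language L over a k-letter alphabet such that the Parikh image of L equals { vᵢ + μ₁·w_i^1 + ... + μ_{m_i}·w_i^{m_i} : 1 ≤ i ≤ n, μ₁,...,μ_{m_i} ∈ ℕ }. -/

import Mathlib

open List

section Basics
variable {α : Type}

/-- Membership in `NFA.evalFrom` from a set is a union over singletons. -/
theorem nfa_evalFrom_iff {σ : Type*} (M : NFA α σ) (x : List α) (T : Set σ) (q : σ) :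
    q ∈ M.evalFrom T x ↔ ∃ s ∈ T, q ∈ M.evalFrom {s} x := by
  induction x generalizing T with
  | nil => simp [NFA.evalFrom]
  | cons a x ih =>
    have h1 : ∀ S : Set σ, M.evalFrom S (a :: x) = M.evalFrom (M.stepSet S a) x := fun _ => rfl
    rw [h1]
    constructor
    · intro hq
      rcases (ih _).1 hq with ⟨t, ht, hq⟩
      rcases M.mem_stepSet.1 ht with ⟨s, hs, hts⟩
      refine ⟨s, hs, ?_⟩
      rw [h1]
      exact (ih _).2 ⟨t, M.mem_stepSet.2 ⟨s, rfl, hts⟩, hq⟩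
    · rintro ⟨s, hs, hq⟩
      rw [h1] at hq
      rcases (ih _).1 hq with ⟨t, ht, hq⟩
      rcases M.mem_stepSet.1 ht with ⟨s', hs', hts⟩
      cases hs'
      exact (ih _).2 ⟨t, M.mem_stepSet.2 ⟨s, hs, hts⟩, hq⟩

theorem isRegular_empty : Language.IsRegular (∅ : Set (List α)) := by
  refine ⟨Unit, inferInstance, ⟨fun _ _ => (), (), ∅⟩, ?_⟩
  ext x
  simp only [DFA.mem_accepts]
  exact iff_of_false (fun h => h) (fun h => h)

theorem isRegular_union {L₁ L₂ : Set (List α)}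
    (h₁ : Language.IsRegular L₁) (h₂ : Language.IsRegular L₂) :
    Language.IsRegular ((L₁ ∪ L₂ : Set (List α))) := by
  obtain ⟨σ₁, _, M₁, rfl⟩ := h₁
  obtain ⟨σ₂, _, M₂, rfl⟩ := h₂
  refine ⟨σ₁ × σ₂, inferInstance,
    ⟨fun p a => (M₁.step p.1 a, M₂.step p.2 a), (M₁.start, M₂.start),
     {p | p.1 ∈ M₁.accept ∨ p.2 ∈ M₂.accept}⟩, ?_⟩
  have key : ∀ (x : List α) (s : σ₁) (t : σ₂),
      DFA.evalFrom ⟨fun p a => (M₁.step p.1 a, M₂.step p.2 a), (M₁.start, M₂.start),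
        {p | p.1 ∈ M₁.accept ∨ p.2 ∈ M₂.accept}⟩ (s, t) x
        = (M₁.evalFrom s x, M₂.evalFrom t x) := by
    intro x
    induction x with
    | nil => intro s t; rfl
    | cons a x ih => intro s t; simpa [DFA.evalFrom] using ih (M₁.step s a) (M₂.step t a)
  ext x
  simp only [DFA.mem_accepts, DFA.eval, key]
  exact Iff.rfl

theorem isRegular_iUnion_fin : ∀ (n : ℕ) (L : Fin n → Set (List α)),
    (∀ i, Language.IsRegular (L i)) → Language.IsRegular ((⋃ i, L i : Set (List α))) := by
  intro n
  induction n with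
  | zero =>
    intro L _
    have : (⋃ i, L i) = (∅ : Set (List α)) := by
      ext x; simp only [Set.mem_iUnion]; simp only [Set.mem_empty_iff_false, iff_false]
      rintro ⟨i, -⟩; exact i.elim0
    rw [this]; exact isRegular_empty
  | succ n ih =>
    intro L hL
    have : (⋃ i, L i) = (L 0 ∪ ⋃ i : Fin n, L i.succ) := by
      ext x
      simp only [Set.mem_iUnion, Set.mem_union]
      constructor
      · rintro ⟨i, hi⟩
        rcases Fin.eq_zero_or_eq_succ i with h | ⟨j, rfl⟩
        · exact Or.inl (h ▸ hi)
        · exact Or.inr ⟨j, hi⟩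
      · rintro (h | ⟨j, hj⟩)
        exacts [⟨0, h⟩, ⟨j.succ, hj⟩]
    rw [this]
    exact isRegular_union (hL 0) (ih _ fun i => hL i.succ)

end Basics

section Block

variable {α : Type} [DecidableEq α] {M : ℕ}

/-- The finite set of states: suffixes of `V` or of some `W j`. -/
def blockStates (V : List α) (W : Fin M → List α) : Finset (List α) :=
  V.tails.toFinset ∪ Finset.univ.biUnion (fun j => (W j).tails.toFinset)

theorem mem_blockStates_of_cons {V : List α} {W : Fin M → List α} {a : α} {l : List α}
    (h : a :: l ∈ blockStates V W) : l ∈ blockStates V W := by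
  simp only [blockStates, Finset.mem_union, List.mem_toFinset, List.mem_tails,
    Finset.mem_biUnion, Finset.mem_univ, true_and] at h ⊢
  rcases h with h | ⟨j, h⟩
  · exact Or.inl ((List.suffix_cons a l).trans h)
  · exact Or.inr ⟨j, (List.suffix_cons a l).trans h⟩

theorem V_mem_blockStates (V : List α) (W : Fin M → List α) : V ∈ blockStates V W := by
  simp [blockStates, List.mem_tails]

theorem W_mem_blockStates (V : List α) (W : Fin M → List α) (j : Fin M) :
    W j ∈ blockStates V W := by
  simp only [blockStates, Finset.mem_union, List.mem_toFinset, List.mem_tails,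
    Finset.mem_biUnion, Finset.mem_univ, true_and]
  exact Or.inr ⟨j, List.suffix_refl _⟩

/-- The NFA for `{V} * ({W j : j})∗`. -/
def blockNFA (V : List α) (W : Fin M → List α) :
    NFA α {l : List α // l ∈ blockStates V W} where
  step q a := {q' | a :: q'.1 = q.1 ∨ (q.1 = [] ∧ ∃ j, a :: q'.1 = W j)}
  start := {q | q.1 = V}
  accept := {q | q.1 = []}

theorem join_cons_exists {M : ℕ} (W : Fin M → List α) :
    ∀ (js : List (Fin M)) (a : α) (x : List α), a :: x = (js.map W).flatten →
      ∃ (j : Fin M) (js' : List (Fin M)) (t : List α),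
        W j = a :: t ∧ x = t ++ (js'.map W).flatten := by
  intro js
  induction js with
  | nil => intro a x h; simp at h
  | cons j₀ rest ih =>
    intro a x h
    simp only [List.map_cons, List.flatten_cons] at h
    cases hW : W j₀ with
    | nil => rw [hW] at h; simp at h; exact ih a x h
    | cons c t =>
      rw [hW] at h
      simp only [List.cons_append, List.cons.injEq] at h
      exact ⟨j₀, rest, t, by rw [hW, h.1], h.2⟩

theorem blockNFA_key (V : List α) (W : Fin M → List α) :
    ∀ (x : List α) (l : List α) (hl : l ∈ blockStates V W),
      (∃ q ∈ (blockNFA V W).accept, q ∈ (blockNFA V W).evalFrom {⟨l, hl⟩} x) ↔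
        ∃ js : List (Fin M), x = l ++ (js.map W).flatten := by
  intro x
  induction x with
  | nil =>
    intro l hl
    constructor
    · rintro ⟨q, hq, hq'⟩
      have hq2 : q = ⟨l, hl⟩ := hq'
      subst hq2
      have hln : l = [] := hq
      exact ⟨[], by simp [hln]⟩
    · rintro ⟨js, hjs⟩
      rcases List.append_eq_nil_iff.1 hjs.symm with ⟨rfl, -⟩
      exact ⟨⟨[], hl⟩, rfl, Set.mem_singleton _⟩
  | cons a x ih =>
    intro l hl
    have h1 : (blockNFA V W).evalFrom {⟨l, hl⟩} (a :: x)
        = (blockNFA V W).evalFrom ((blockNFA V W).stepSet {⟨l, hl⟩} a) x := rfl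
    have h2 : (blockNFA V W).stepSet {⟨l, hl⟩} a = (blockNFA V W).step ⟨l, hl⟩ a := by
      ext q; simp [NFA.mem_stepSet]
    constructor
    · rintro ⟨q, hq, hq'⟩
      rw [h1, h2] at hq'
      rcases (nfa_evalFrom_iff _ _ _ _).1 hq' with ⟨s, hs, hq'⟩
      obtain ⟨sl, hsl⟩ := s
      rcases (ih sl hsl).1 ⟨q, hq, hq'⟩ with ⟨js, hjs⟩
      rcases hs with h | ⟨hnil, j, hj⟩
      · have h' : a :: sl = l := h
        exact ⟨js, by rw [← h']; simp [hjs]⟩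
      · have hnil' : l = [] := hnil
        have hj' : a :: sl = W j := hj
        exact ⟨j :: js, by simp [hnil', ← hj', hjs]⟩
    · rintro ⟨js, hjs⟩
      cases l with
      | cons b l₀ =>
        simp only [List.cons_append, List.cons.injEq] at hjs
        obtain ⟨rfl, hx⟩ := hjs
        have hl₀ : l₀ ∈ blockStates V W := mem_blockStates_of_cons hl
        rcases (ih l₀ hl₀).2 ⟨js, hx⟩ with ⟨q, hq, hq'⟩
        refine ⟨q, hq, ?_⟩
        rw [h1, h2]
        exact (nfa_evalFrom_iff _ _ _ _).2 ⟨⟨l₀, hl₀⟩, Or.inl rfl, hq'⟩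
      | nil =>
        simp only [List.nil_append] at hjs
        rcases join_cons_exists W js a x hjs with ⟨j, js', t, hWj, hx⟩
        have ht : t ∈ blockStates V W := by
          have hWm := W_mem_blockStates V W j
          rw [hWj] at hWm
          exact mem_blockStates_of_cons hWm
        rcases (ih t ht).2 ⟨js', hx⟩ with ⟨q, hq, hq'⟩
        refine ⟨q, hq, ?_⟩
        rw [h1, h2]
        exact (nfa_evalFrom_iff _ _ _ _).2
          ⟨⟨t, ht⟩, Or.inr ⟨rfl, j, hWj.symm⟩, hq'⟩

theorem blockNFA_accepts (V : List α) (W : Fin M → List α) :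
    (blockNFA V W).accepts = {x | ∃ js : List (Fin M), x = V ++ (js.map W).flatten} := by
  ext x
  rw [NFA.mem_accepts]
  constructor
  · rintro ⟨q, hq, hq'⟩
    rcases (nfa_evalFrom_iff _ _ _ _).1 hq' with ⟨s, hs, hq'⟩
    have hsV : s = ⟨V, V_mem_blockStates V W⟩ := Subtype.ext hs
    subst hsV
    exact (blockNFA_key V W x V _).1 ⟨q, hq, hq'⟩
  · intro hx
    rcases (blockNFA_key V W x V (V_mem_blockStates V W)).2 hx with ⟨q, hq, hq'⟩
    exact ⟨q, hq, (nfa_evalFrom_iff _ _ _ _).2 ⟨⟨V, V_mem_blockStates V W⟩, rfl, hq'⟩⟩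

theorem isRegular_block (V : List α) (W : Fin M → List α) :
    Language.IsRegular {x | ∃ js : List (Fin M), x = V ++ (js.map W).flatten} := by
  refine ⟨Set {l : List α // l ∈ blockStates V W}, inferInstance, (blockNFA V W).toDFA, ?_⟩
  rw [NFA.toDFA_correct, blockNFA_accepts]

end Block

section Counting

/-- `rep x` is a canonical word with letter counts `x`. -/
def rep {N : ℕ} (x : Fin N → ℕ) : List (Fin N) :=
  (List.ofFn fun a => List.replicate (x a) a).flatten

theorem count_rep {N : ℕ} (x : Fin N → ℕ) (a : Fin N) : (rep x).count a = x a := by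
  simp only [rep, List.count_flatten, List.map_ofFn, List.sum_ofFn, Function.comp,
    List.count_replicate, beq_iff_eq]
  simp [Finset.sum_ite_eq' Finset.univ a x]

theorem sum_map_count {N : ℕ} (g : Fin N → ℕ) :
    ∀ js : List (Fin N), (js.map g).sum = ∑ j, js.count j * g j := by
  intro js
  induction js with
  | nil => simp
  | cons j₀ js ih =>
    simp only [List.map_cons, List.sum_cons, ih, List.count_cons, beq_iff_eq]
    rw [Finset.sum_congr rfl (fun j _ => add_mul (js.count j) _ (g j)),
      Finset.sum_add_distrib]
    have h : (∑ j : Fin N, (if j₀ = j then 1 else 0) * g j) = g j₀ := by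
      simp [ite_mul]
    rw [h]
    exact (add_comm _ _)

end Counting


/-- Every semilinear subset of ℕᵏ is the Parikh image of a regular
language: given base vectors `v i` and period vectors `w i j`, there is a regular
language `L` over a `k`-letter alphabet whose Parikh image (letter counts of its words)
is exactly the semilinear set `⋃ i, v i + ℕ·w i 1 + ... + ℕ·w i (m i)`. -/
theorem semilinear_is_parikh_of_regular (k n : ℕ) (v : Fin n → Fin k → ℕ)
    (m : Fin n → ℕ) (w : (i : Fin n) → Fin (m i) → Fin k → ℕ) :
    ∃ L : Language (Fin k), L.IsRegular ∧
      {x : Fin k → ℕ | ∃ u ∈ L, x = fun a => u.count a} =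
      {x : Fin k → ℕ | ∃ (i : Fin n) (μ : Fin (m i) → ℕ),
        x = v i + ∑ j, μ j • w i j} := by
  set L : Fin n → Set (List (Fin k)) := fun i =>
    {x | ∃ js : List (Fin (m i)), x = rep (v i) ++ (js.map fun j => rep (w i j)).flatten}
    with hLdef
  refine ⟨⋃ i, L i, isRegular_iUnion_fin n L (fun i => isRegular_block _ _), ?_⟩
  have hmem : ∀ u : List (Fin k), u ∈ (⋃ i, L i) ↔ ∃ i, u ∈ L i := fun u => Set.mem_iUnion
  have count_word : ∀ (i : Fin n) (js : List (Fin (m i))) (a : Fin k),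
      (rep (v i) ++ (js.map fun j => rep (w i j)).flatten).count a
        = v i a + ∑ j, js.count j * w i j a := by
    intro i js a
    rw [List.count_append, count_rep, List.count_flatten]
    congr 1
    rw [List.map_map]
    have h : (List.count a ∘ fun j => rep (w i j)) = fun j => w i j a := by
      funext j; exact count_rep (w i j) a
    rw [h, sum_map_count]
  ext x
  simp only [Set.mem_setOf_eq]
  constructor
  · rintro ⟨u, hu, rfl⟩
    rcases (hmem u).1 hu with ⟨i, js, rfl⟩
    refine ⟨i, fun j => js.count j, ?_⟩
    funext a
    simp only [Pi.add_apply, Finset.sum_apply, Pi.smul_apply, smul_eq_mul]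
    exact count_word i js a
  · rintro ⟨i, μ, rfl⟩
    refine ⟨rep (v i) ++ ((rep μ).map fun j => rep (w i j)).flatten,
      (hmem _).2 ⟨i, rep μ, rfl⟩, ?_⟩
    funext a
    simp only [Pi.add_apply, Finset.sum_apply, Pi.smul_apply, smul_eq_mul]
    rw [count_word i (rep μ) a]
    congr 1
    exact Finset.sum_congr rfl fun j _ => by rw [count_rep]
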